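/- Every solvable Lie subalgebra of so(V), the Lie algebra of skew-symmetric endomorphisms of a finite-dimensional real positive-definite inner product space V, is abelian. -/

import Mathlib

open RealInnerProductSpace

attribute [local instance] LieRing.ofAssociativeRing

/-- Cyclic trace computation: if `c = x*a - a*x` and `a` commutes with `c`,
then `tr (c*c) = 0`. -/
lemma aux_trace_sq_eq_zero {V : Type*} [NormedAddCommGroup V] [InnerProductSpace ℝ V]
    [FiniteDimensional ℝ V] (x a c : Module.End ℝ V)
    (h1 : c = x * a - a * x) (h2 : a * c - c * a = 0) :
    LinearMap.trace ℝ V (c * c) = 0 := by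
  have e : c * c = x * (a * c) - a * (x * c) := by rw [h1]; noncomm_ring
  rw [e, map_sub, LinearMap.trace_mul_comm ℝ a (x * c)]
  have e2 : x * c * a = x * (c * a) := by noncomm_ring
  rw [e2, ← map_sub, show x * (a * c) - x * (c * a) = x * (a * c - c * a) by noncomm_ring, h2,
    mul_zero, map_zero]

/-- A skew-symmetric endomorphism with `tr (F*F) = 0` is zero. -/
lemma aux_skew_eq_zero {V : Type*} [NormedAddCommGroup V] [InnerProductSpace ℝ V]
    [FiniteDimensional ℝ V] (F : Module.End ℝ V)
    (hF : ∀ x y : V, ⟪F x, y⟫ = -⟪x, F y⟫)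
    (htr : LinearMap.trace ℝ V (F * F) = 0) : F = 0 := by
  let b := stdOrthonormalBasis ℝ V
  have htrace : LinearMap.trace ℝ V (F * F) = ∑ i, ⟪b i, (F * F) (b i)⟫ := by
    rw [LinearMap.trace_eq_matrix_trace ℝ b.toBasis, Matrix.trace]
    congr 1
    ext i
    rw [Matrix.diag_apply, LinearMap.toMatrix_apply, b.coe_toBasis_repr_apply,
      b.repr_apply_apply, b.coe_toBasis]
  have hsum : ∀ i, ⟪b i, (F * F) (b i)⟫ = -(‖F (b i)‖ ^ 2) := by
    intro i
    have : ⟪F (b i), F (b i)⟫ = -⟪b i, F (F (b i))⟫ := hF (b i) (F (b i))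
    have h' : ⟪b i, (F * F) (b i)⟫ = -⟪F (b i), F (b i)⟫ := by
      rw [Module.End.mul_apply]; linarith
    rw [h', real_inner_self_eq_norm_sq]
  rw [htrace] at htr
  simp only [hsum] at htr
  have hzero : ∀ i, F (b i) = 0 := by
    have h0 : ∑ i, ‖F (b i)‖ ^ 2 = 0 := by
      have := htr
      rw [Finset.sum_neg_distrib] at this
      linarith
    intro i
    have := (Finset.sum_eq_zero_iff_of_nonneg (fun i _ => by positivity)).mp h0 i
      (Finset.mem_univ i)
    have : ‖F (b i)‖ = 0 := by nlinarith [norm_nonneg (F (b i))]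
    simpa using this
  apply b.toBasis.ext
  intro i
  simpa using hzero i

lemma ds_succ {R L : Type*} [CommRing R] [LieRing L] [LieAlgebra R L] (k : ℕ) :
    LieAlgebra.derivedSeries R L (k + 1) =
      ⁅LieAlgebra.derivedSeries R L k, LieAlgebra.derivedSeries R L k⁆ := by
  rw [LieAlgebra.derivedSeries_def, LieAlgebra.derivedSeriesOfIdeal_succ,
    ← LieAlgebra.derivedSeries_def]

lemma ds_antitone {R L : Type*} [CommRing R] [LieRing L] [LieAlgebra R L] {k l : ℕ}
    (hkl : k ≤ l) : LieAlgebra.derivedSeries R L l ≤ LieAlgebra.derivedSeries R L k := by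
  rw [LieAlgebra.derivedSeries_def, LieAlgebra.derivedSeries_def]
  exact LieAlgebra.derivedSeriesOfIdeal_antitone ⊤ hkl

/-- Every solvable Lie subalgebra of the skew-symmetric endomorphisms of a
finite-dimensional real inner product space is abelian. -/
theorem solvable_subalgebra_of_skew_is_abelian
    (V : Type*) [NormedAddCommGroup V] [InnerProductSpace ℝ V] [FiniteDimensional ℝ V]
    (h : LieSubalgebra ℝ (Module.End ℝ V))
    (hskew : ∀ F ∈ h, ∀ x y : V, ⟪F x, y⟫ = -⟪x, F y⟫)
    (hsolv : LieAlgebra.IsSolvable h) :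
    ∀ x ∈ h, ∀ y ∈ h, ⁅x, y⁆ = (0 : Module.End ℝ V) := by
  -- step: if D^{n+2} = ⊥ then D^{n+1} = ⊥
  have step : ∀ n : ℕ, LieAlgebra.derivedSeries ℝ h (n + 2) = ⊥ →
      LieAlgebra.derivedSeries ℝ h (n + 1) = ⊥ := by
    intro n hn2
    -- every element of D^{n+1} is central in h
    have central : ∀ (z : h) (a : h), a ∈ LieAlgebra.derivedSeries ℝ h (n + 1) →
        ⁅z, a⁆ = (0 : h) := by
      intro z a ha
      set c : h := ⁅z, a⁆ with hc
      have hcmem : c ∈ LieAlgebra.derivedSeries ℝ h (n + 1) :=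
        (LieAlgebra.derivedSeries ℝ h (n + 1)).lie_mem ha
      have hac : ⁅a, c⁆ = (0 : h) := by
        have : ⁅a, c⁆ ∈ LieAlgebra.derivedSeries ℝ h (n + 2) := by
          rw [ds_succ]
          exact LieSubmodule.lie_mem_lie ha hcmem
        rwa [hn2, LieSubmodule.mem_bot] at this
      have hacE : (a : Module.End ℝ V) * c - c * a = 0 := by
        have := congrArg (Subtype.val) hac
        simpa [LieSubalgebra.coe_bracket, Ring.lie_def] using this
      have hcE : (c : Module.End ℝ V) = z * a - a * z := by
        simp [hc, LieSubalgebra.coe_bracket, Ring.lie_def]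
      have htr := aux_trace_sq_eq_zero (z : Module.End ℝ V) a c hcE hacE
      have hcskew := hskew c c.2
      have : (c : Module.End ℝ V) = 0 := aux_skew_eq_zero _ hcskew htr
      exact Subtype.ext this
    -- now D^{n+1} = ⁅D^n, D^n⁆ = ⊥
    rw [ds_succ, LieSubmodule.lie_eq_bot_iff]
    intro x hx y hy
    have habr : ⁅x, y⁆ ∈ LieAlgebra.derivedSeries ℝ h (n + 1) := by
      rw [ds_succ]
      exact LieSubmodule.lie_mem_lie hx hy
    have hcent := central y ⁅x, y⁆ habr
    have hacE : (y : Module.End ℝ V) * (⁅x, y⁆ : h) - (⁅x, y⁆ : h) * y = 0 := by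
      have := congrArg (Subtype.val) hcent
      simpa [LieSubalgebra.coe_bracket, Ring.lie_def] using this
    have hcE : ((⁅x, y⁆ : h) : Module.End ℝ V) = (x : Module.End ℝ V) * y - y * x := by
      simp [LieSubalgebra.coe_bracket, Ring.lie_def]
    have htr := aux_trace_sq_eq_zero (x : Module.End ℝ V) y ⁅x, y⁆ hcE hacE
    have hcskew := hskew _ (⁅x, y⁆ : h).2
    have : ((⁅x, y⁆ : h) : Module.End ℝ V) = 0 := aux_skew_eq_zero _ hcskew htr
    exact Subtype.ext this
  -- conclude D^1 = ⊥
  obtain ⟨k, hk⟩ := (LieAlgebra.isSolvable_iff ℝ h).mp hsolv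
  have h1 : LieAlgebra.derivedSeries ℝ h 1 = ⊥ := by
    have hk1 : LieAlgebra.derivedSeries ℝ h (k + 1) = ⊥ :=
      le_bot_iff.mp (hk ▸ ds_antitone (Nat.le_succ k))
    clear hk
    induction k with
    | zero => exact hk1
    | succ m ih => exact ih (step m hk1)
  intro x hx y hy
  have hb : ⁅(⟨x, hx⟩ : h), (⟨y, hy⟩ : h)⁆ ∈ LieAlgebra.derivedSeries ℝ h 1 := by
    rw [ds_succ]
    exact LieSubmodule.lie_mem_lie (LieSubmodule.mem_top _) (LieSubmodule.mem_top _)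
  rw [h1, LieSubmodule.mem_bot] at hb
  have := congrArg (Subtype.val) hb
  simpa [LieSubalgebra.coe_bracket] using this
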